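/- Let τ < θ be reals and let Δp and q be continuous ℝˡ-valued functions on [τ,θ]. Suppose there is α > 0 with ‖Δp‖_{i,τ,θ} ≥ α‖Δp‖_{τ,θ}, and suppose ‖q‖_{i,τ,θ} ≤ (α/2)‖Δp‖_{τ,θ} and ‖q‖_{τ,θ} ≤ ‖Δp‖_{τ,θ}. Then ‖Δp + q‖_{i,τ,θ} ≥ (α/4)‖Δp + q‖_{τ,θ}. -/
import Mathlib

open Set Filter Asymptotics MeasureTheory

/-- Euclidean norm of a vector in `ℝˡ`. -/
noncomputable def euclNorm {l : ℕ} (v : Fin l → ℝ) : ℝ := Real.sqrt (∑ i, v i ^ 2)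

/-- `‖q‖_{a,b} = max_{t ∈ [a,b]} |q(t)|`. -/
noncomputable def supNorm {l : ℕ} (a b : ℝ) (q : ℝ → Fin l → ℝ) : ℝ :=
  sSup ((fun t => euclNorm (q t)) '' Set.Icc a b)

/-- `‖q‖_{i,a,b} = ∫_a^b |q(t)| dt`. -/
noncomputable def intNorm {l : ℕ} (a b : ℝ) (q : ℝ → Fin l → ℝ) : ℝ :=
  ∫ t in a..b, euclNorm (q t)

lemma euclNorm_eq_norm {l : ℕ} (v : Fin l → ℝ) :
    euclNorm v = ‖(WithLp.equiv 2 (Fin l → ℝ)).symm v‖ := by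
  rw [EuclideanSpace.norm_eq]
  simp [euclNorm, Real.norm_eq_abs, sq_abs]

lemma euclNorm_add_le {l : ℕ} (v w : Fin l → ℝ) :
    euclNorm (v + w) ≤ euclNorm v + euclNorm w := by
  simp only [euclNorm_eq_norm]
  rw [show (WithLp.equiv 2 (Fin l → ℝ)).symm (v + w) = (WithLp.equiv 2 (Fin l → ℝ)).symm v + (WithLp.equiv 2 (Fin l → ℝ)).symm w from rfl]
  exact norm_add_le _ _

lemma euclNorm_neg {l : ℕ} (v : Fin l → ℝ) : euclNorm (-v) = euclNorm v := by
  simp [euclNorm, neg_sq]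

lemma euclNorm_le {l : ℕ} (v w : Fin l → ℝ) :
    euclNorm v ≤ euclNorm (v + w) + euclNorm w := by
  have : v = (v + w) + (-w) := by ring
  calc euclNorm v = euclNorm ((v + w) + (-w)) := by rw [← this]
    _ ≤ euclNorm (v + w) + euclNorm (-w) := euclNorm_add_le _ _
    _ = euclNorm (v + w) + euclNorm w := by rw [euclNorm_neg]

lemma continuous_euclNorm {l : ℕ} : Continuous (euclNorm (l := l)) :=
  Real.continuous_sqrt.comp (continuous_finset_sum _ fun i _ => (continuous_apply i).pow 2)

lemma supNorm_le {l : ℕ} {a b : ℝ} (hab : a ≤ b) {f : ℝ → Fin l → ℝ} {M : ℝ}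
    (h : ∀ t ∈ Set.Icc a b, euclNorm (f t) ≤ M) : supNorm a b f ≤ M := by
  apply csSup_le ((Set.nonempty_Icc.2 hab).image _)
  rintro x ⟨t, ht, rfl⟩
  exact h t ht

lemma le_supNorm {l : ℕ} {a b : ℝ} {f : ℝ → Fin l → ℝ}
    (hf : ContinuousOn f (Set.Icc a b)) {t : ℝ} (ht : t ∈ Set.Icc a b) :
    euclNorm (f t) ≤ supNorm a b f := by
  apply le_csSup _ (Set.mem_image_of_mem _ ht)
  exact (isCompact_Icc.image_of_continuousOn
    (continuous_euclNorm.comp_continuousOn hf)).bddAbove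

theorem stmt14 (l : ℕ) (τ θ : ℝ) (hτθ : τ < θ)
    (Δp q : ℝ → Fin l → ℝ)
    (hΔpc : ContinuousOn Δp (Set.Icc τ θ)) (hqc : ContinuousOn q (Set.Icc τ θ))
    (α : ℝ) (hα : 0 < α)
    (h1 : intNorm τ θ Δp ≥ α * supNorm τ θ Δp)
    (h2 : intNorm τ θ q ≤ (α / 2) * supNorm τ θ Δp)
    (h3 : supNorm τ θ q ≤ supNorm τ θ Δp) :
    intNorm τ θ (fun t => Δp t + q t) ≥ (α / 4) * supNorm τ θ (fun t => Δp t + q t) := by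
  have hle := hτθ.le
  have hsc : ContinuousOn (fun t => Δp t + q t) (Set.Icc τ θ) := hΔpc.add hqc
  have I1 : IntervalIntegrable (fun t => euclNorm (Δp t)) volume τ θ :=
    ContinuousOn.intervalIntegrable_of_Icc hle (continuous_euclNorm.comp_continuousOn hΔpc)
  have I2 : IntervalIntegrable (fun t => euclNorm (q t)) volume τ θ :=
    ContinuousOn.intervalIntegrable_of_Icc hle (continuous_euclNorm.comp_continuousOn hqc)
  have I3 : IntervalIntegrable (fun t => euclNorm (Δp t + q t)) volume τ θ :=
    ContinuousOn.intervalIntegrable_of_Icc hle (continuous_euclNorm.comp_continuousOn hsc)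
  -- intNorm Δp ≤ intNorm (Δp+q) + intNorm q
  have hA : intNorm τ θ Δp ≤ intNorm τ θ (fun t => Δp t + q t) + intNorm τ θ q := by
    have := intervalIntegral.integral_mono_on (μ := volume) hle I1 (I3.add I2)
      (fun t ht => euclNorm_le (Δp t) (q t))
    rw [intervalIntegral.integral_add I3 I2] at this
    exact this
  -- supNorm (Δp+q) ≤ 2 * supNorm Δp
  have hB : supNorm τ θ (fun t => Δp t + q t) ≤ 2 * supNorm τ θ Δp := by
    apply supNorm_le hle
    intro t ht
    calc euclNorm (Δp t + q t) ≤ euclNorm (Δp t) + euclNorm (q t) := euclNorm_add_le _ _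
      _ ≤ supNorm τ θ Δp + supNorm τ θ q :=
          add_le_add (le_supNorm hΔpc ht) (le_supNorm hqc ht)
      _ ≤ supNorm τ θ Δp + supNorm τ θ Δp := by linarith
      _ = 2 * supNorm τ θ Δp := by ring
  nlinarith [hA, hB, h1, h2, hα.le]
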